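/- Let B₁ = A − λ₁I, B₂ = A − λ₂I with λ₁ ≠ λ₂, s > 0, γ ∈ ℂ, and let (u, v) be a singular pair of Q = [[B₁, γI],[0, B₂]] for singular value s (Qv = su, Q*u = sv), with u = (u₁,u₂), v = (v₁,v₂). If u₁* v₂ = 0, then ‖u₁‖ = ‖v₁‖ and ‖u₂‖ = ‖v₂‖ and u₁* u₂ = v₁* v₂; i.e., with U = [u₁ u₂] and V = [v₁ v₂] (n×2 matrices), U*U = V*V. -/

import Mathlib

open Matrix
noncomputable def specNorm {m : Type*} [Fintype m] [DecidableEq m] (A : Matrix m m ℂ) : ℝ :=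
  ‖Matrix.toEuclideanCLM (𝕜 := ℂ) A‖
noncomputable def sVal {m : Type*} [Fintype m] [DecidableEq m] (A : Matrix m m ℂ) (j : ℕ) : ℝ :=
  sInf {r : ℝ | ∃ B : Matrix m m ℂ, B.rank < j ∧ specNorm (A - B) = r}

private lemma adj_dot {n : ℕ} (B : Matrix (Fin n) (Fin n) ℂ) (x y : Fin n → ℂ) :
    star (Bᴴ.mulVec x) ⬝ᵥ y = star x ⬝ᵥ B.mulVec y := by
  rw [Matrix.star_mulVec, Matrix.conjTranspose_conjTranspose, ← Matrix.dotProduct_mulVec]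

theorem stmt10 {n : ℕ} (A : Matrix (Fin n) (Fin n) ℂ) (lam1 lam2 : ℂ) (hne : lam1 ≠ lam2)
    (s : ℝ) (hs : 0 < s) (gam : ℂ) (u v : Fin n ⊕ Fin n → ℂ)
    (hQv : (Matrix.fromBlocks (A - lam1 • 1) (gam • 1) 0 (A - lam2 • 1)).mulVec v = (s : ℂ) • u)
    (hQu : (Matrix.fromBlocks (A - lam1 • 1) (gam • 1) 0 (A - lam2 • 1))ᴴ.mulVec u = (s : ℂ) • v)
    (horth : star (u ∘ Sum.inl) ⬝ᵥ (v ∘ Sum.inr) = 0) :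
    let U : Matrix (Fin n) (Fin 2) ℂ := Matrix.of fun p j => ![u (Sum.inl p), u (Sum.inr p)] j
    let V : Matrix (Fin n) (Fin 2) ℂ := Matrix.of fun p j => ![v (Sum.inl p), v (Sum.inr p)] j
    (star (u ∘ Sum.inl) ⬝ᵥ (u ∘ Sum.inl) = star (v ∘ Sum.inl) ⬝ᵥ (v ∘ Sum.inl)) ∧
    (star (u ∘ Sum.inr) ⬝ᵥ (u ∘ Sum.inr) = star (v ∘ Sum.inr) ⬝ᵥ (v ∘ Sum.inr)) ∧
    (star (u ∘ Sum.inl) ⬝ᵥ (u ∘ Sum.inr) = star (v ∘ Sum.inl) ⬝ᵥ (v ∘ Sum.inr)) ∧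
    Uᴴ * U = Vᴴ * V := by
  intro U V
  set B1 := A - lam1 • 1 with hB1
  set B2 := A - lam2 • 1 with hB2
  set u1 := u ∘ Sum.inl with hu1
  set u2 := u ∘ Sum.inr with hu2
  set v1 := v ∘ Sum.inl with hv1
  set v2 := v ∘ Sum.inr with hv2
  have hsC : (s : ℂ) ≠ 0 := by exact_mod_cast hs.ne'
  rw [← Sum.elim_comp_inl_inr v, Matrix.fromBlocks_mulVec] at hQv
  rw [Matrix.fromBlocks_conjTranspose, ← Sum.elim_comp_inl_inr u, Matrix.fromBlocks_mulVec] at hQu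
  have eq1 : B1.mulVec v1 + gam • v2 = (s:ℂ) • u1 := by
    have := congrArg (· ∘ Sum.inl) hQv
    simpa [Matrix.smul_mulVec, Matrix.one_mulVec, hu1, hu2, hv1, hv2, Function.comp_def, Pi.smul_def, Pi.add_def, Complex.real_smul] using this
  have eq2 : B2.mulVec v2 = (s:ℂ) • u2 := by
    have := congrArg (· ∘ Sum.inr) hQv
    simpa [hv2, hu2, Function.comp_def, Pi.smul_def, Complex.real_smul] using this
  have eq3 : B1ᴴ.mulVec u1 = (s:ℂ) • v1 := by
    have := congrArg (· ∘ Sum.inl) hQu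
    simpa [hv1, hu1, Function.comp_def, Pi.smul_def, Complex.real_smul] using this
  have eq4 : (star gam) • u1 + B2ᴴ.mulVec u2 = (s:ℂ) • v2 := by
    have := congrArg (· ∘ Sum.inr) hQu
    simpa [Matrix.smul_mulVec, Matrix.one_mulVec, Matrix.conjTranspose_smul, hu1, hu2, hv1, hv2, Function.comp_def, Pi.smul_def, Pi.add_def, Complex.real_smul] using this
  have eq1' : B1.mulVec v1 = (s:ℂ) • u1 - gam • v2 := eq_sub_of_add_eq eq1
  have eq4' : B2ᴴ.mulVec u2 = (s:ℂ) • v2 - (star gam) • u1 := by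
    rw [← eq4]; abel
  have hBB : B2 = B1 + (lam1 - lam2) • 1 := by
    rw [hB1, hB2, sub_smul]; abel
  -- first identity
  have h1 : star u1 ⬝ᵥ u1 = star v1 ⬝ᵥ v1 := by
    refine mul_left_cancel₀ hsC ?_
    have h := adj_dot B1 u1 v1
    rw [eq3, eq1'] at h
    simpa [star_smul, smul_dotProduct, dotProduct_smul,
      dotProduct_sub, horth, Complex.star_def, Complex.conj_ofReal,
      smul_eq_mul] using h.symm
  -- second identity
  have h2 : star u2 ⬝ᵥ u2 = star v2 ⬝ᵥ v2 := by
    refine mul_left_cancel₀ hsC ?_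
    have h := adj_dot B2 u2 v2
    rw [eq4', eq2] at h
    simpa [star_smul, smul_dotProduct, dotProduct_smul,
      sub_dotProduct, horth, Complex.star_def, Complex.conj_ofReal,
      smul_eq_mul] using h.symm
  -- third identity
  have h3 : star u1 ⬝ᵥ u2 = star v1 ⬝ᵥ v2 := by
    refine mul_left_cancel₀ hsC ?_
    have h := adj_dot B1 u1 v2
    rw [eq3] at h
    have h' : star u1 ⬝ᵥ B2.mulVec v2
        = star u1 ⬝ᵥ B1.mulVec v2 + (lam1 - lam2) * (star u1 ⬝ᵥ v2) := by
      rw [hBB]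
      simp [Matrix.add_mulVec, Matrix.smul_mulVec, Matrix.one_mulVec,
        dotProduct_add, dotProduct_smul, smul_eq_mul]
    rw [eq2, horth, mul_zero, add_zero, ← h] at h'
    simpa [star_smul, smul_dotProduct, dotProduct_smul,
      Complex.star_def, Complex.conj_ofReal, smul_eq_mul] using h'
  have h3s : star u2 ⬝ᵥ u1 = star v2 ⬝ᵥ v1 := by
    have := congrArg star h3
    simpa [dotProduct, Finset.sum_comm, star_sum, mul_comm] using this
  refine ⟨h1, h2, h3, ?_⟩
  ext i j
  fin_cases i <;> fin_cases j <;>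
    simp only [Matrix.mul_apply, Matrix.conjTranspose_apply, Matrix.of_apply, U, V,
      Matrix.cons_val_zero, Matrix.cons_val_one, Matrix.head_cons, Fin.mk_zero, Fin.mk_one]
  · simpa [dotProduct, hu1, hv1] using h1
  · simpa [dotProduct, hu1, hu2, hv1, hv2] using h3
  · simpa [dotProduct, hu1, hu2, hv1, hv2] using h3s
  · simpa [dotProduct, hu2, hv2] using h2
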